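/- Let R be a commutative ring, let b, c ∈ R, and let S be a subset of R. Let I be the ideal of R[X] generated by X² + bX + c together with all elements s·X for s ∈ S, and let x̄ denote the image of X in the quotient ring R[X]/I. Then for r ∈ R, the element r·x̄ is zero in R[X]/I if and only if r lies in the ideal of R generated by S; that is, the annihilator in R of x̄ (under the R-module structure of R[X]/I) equals the ideal of R generated by S. -/

import Mathlib

open Polynomial

/-- Let `R` be a commutative ring, `b c : R`, `S ⊆ R`. Let `I` be the ideal of
`R[X]` generated by `X² + bX + c` together with all `s·X` for `s ∈ S`, and let `x̄` be the image
of `X` in `R[X]/I`. Then for `r : R`, `r • x̄ = 0` in `R[X]/I` if and only if `r` lies in the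
ideal of `R` generated by `S`: the annihilator in `R` of `x̄` equals `Ideal.span S`. -/
theorem annihilator_of_class_of_X {R : Type*} [CommRing R] (b c : R) (S : Set R) (r : R) :
    r • (Ideal.Quotient.mk
          (Ideal.span ({X ^ 2 + C b * X + C c} ∪ (fun s : R => C s * X) '' S)) X) = 0 ↔
      r ∈ Ideal.span S := by
  set I : Ideal R[X] :=
    Ideal.span ({X ^ 2 + C b * X + C c} ∪ (fun s : R => C s * X) '' S) with hI
  set J : Ideal R := Ideal.span S with hJ
  have hsmul : r • (Ideal.Quotient.mk I X) = Ideal.Quotient.mk I (C r * X) := by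
    rw [← Ideal.Quotient.mkₐ_eq_mk R I, ← map_smul, Polynomial.smul_eq_C_mul]
  rw [hsmul, Ideal.Quotient.eq_zero_iff_mem]
  constructor
  · intro hm
    rw [hI, Ideal.span_union, Submodule.mem_sup] at hm
    obtain ⟨y, hy, z, hz, hyz⟩ := hm
    rw [Ideal.mem_span_singleton'] at hy
    obtain ⟨f, rfl⟩ := hy
    have hz' : z ∈ Ideal.map (C : R →+* R[X]) J := by
      refine Ideal.span_le.mpr ?_ hz
      rintro t ⟨s, hs, rfl⟩
      exact Ideal.mul_mem_right _ _
        (Ideal.mem_map_of_mem _ (Ideal.subset_span hs))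
    -- pass to (R/J)[X]
    set π := Ideal.Quotient.mk J
    have hzmap : z.map π = 0 := by
      ext n
      have := Ideal.mem_map_C_iff.mp hz' n
      simp [Polynomial.coeff_map, Ideal.Quotient.eq_zero_iff_mem.mpr this]
      exact Ideal.Quotient.eq_zero_iff_mem.mpr this
    have heq : (f.map π) * (X ^ 2 + C (π b) * X + C (π c)) = C (π r) * X := by
      have := congrArg (Polynomial.map π) hyz
      simpa [Polynomial.map_add, Polynomial.map_mul, hzmap] using this
    have hf0 : f.map π = 0 := by
      by_contra hf
      have hnt : Nontrivial (R ⧸ J) :=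
        Polynomial.nontrivial_iff.mp (nontrivial_of_ne _ _ hf)
      have hdeg : (X ^ 2 + C (π b) * X + C (π c) : (R ⧸ J)[X]).natDegree = 2 := by
        compute_degree!
      have hmonic : (X ^ 2 + C (π b) * X + C (π c) : (R ⧸ J)[X]).Monic := by
        have h1 : (C (π b) * X + C (π c) : (R ⧸ J)[X]).degree < 2 := by
          apply lt_of_le_of_lt (degree_add_le _ _)
          apply max_lt
          · calc (C (π b) * X : (R ⧸ J)[X]).degree ≤ 0 + 1 :=
                  le_trans (degree_mul_le _ _) (add_le_add degree_C_le degree_X_le)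
              _ < 2 := by norm_num
          · exact lt_of_le_of_lt degree_C_le (by norm_num)
        simpa [add_assoc] using monic_X_pow_add h1
      have h1 : ((f.map π) * (X ^ 2 + C (π b) * X + C (π c))).natDegree =
          2 + (f.map π).natDegree := by
        rw [mul_comm, hmonic.natDegree_mul' hf, hdeg]
      have h2 : ((C (π r) * X : (R ⧸ J)[X])).natDegree ≤ 1 :=
        le_trans (natDegree_mul_le) (by simp [natDegree_X_le])
      rw [heq] at h1
      omega
    rw [hf0, zero_mul] at heq
    have : π r = 0 := by
      have := congrArg (fun p => Polynomial.coeff p 1) heq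
      simpa using this.symm
    exact Ideal.Quotient.eq_zero_iff_mem.mp this
  · intro hr
    have : ∀ a ∈ J, C a * X ∈ I := by
      intro a ha
      refine Submodule.span_induction ?_ ?_ ?_ ?_ ha
      · intro s hs
        exact Ideal.subset_span (Or.inr ⟨s, hs, rfl⟩)
      · simp
      · intro x y _ _ hx hy
        simpa [add_mul] using Ideal.add_mem I hx hy
      · intro t x _ hx
        have : C (t • x) * X = C t * (C x * X) := by
          simp [smul_eq_mul, mul_assoc]
        rw [this]
        exact Ideal.mul_mem_left I _ hx
    exact this r hr
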